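/- Let R > 0 a.s. be a random variable such that 1/R has regularly varying survival function with index −α for some α ∈ (0,1), and let ψ be the Williamson d-transform of R. Then x ↦ 1 − ψ(1/x) is regularly varying at infinity with index −α. -/

import Mathlib

open MeasureTheory ProbabilityTheory Filter Set


lemma one_sub_min (u : ℝ) : 1 - min 1 u = max (1 - u) 0 := by
  rcases le_total 1 u with h | h
  · rw [min_eq_left h, max_eq_right (by linarith)]; ring
  · rw [min_eq_right h, max_eq_left (by linarith)]

lemma calc0 (n : ℕ) (hn : 1 ≤ n) (u : ℝ) (hu : 0 < u) :
    ∫ s in Ioo (0:ℝ) 1, (if s < u then (n:ℝ) * (1-s)^(n-1) else 0)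
      = 1 - (max (1-u) 0)^n := by
  have hmem : ∀ s : ℝ, (if s < u then (n:ℝ) * (1-s)^(n-1) else 0)
      = (Iio u).indicator (fun s => (n:ℝ) * (1-s)^(n-1)) s := by
    intro s; simp [Set.indicator_apply, Set.mem_Iio]
  rw [MeasureTheory.integral_congr_ae (Filter.Eventually.of_forall hmem)]
  rw [MeasureTheory.setIntegral_indicator measurableSet_Iio]
  have hset : Ioo (0:ℝ) 1 ∩ Iio u = Ioo 0 (min 1 u) := by
    ext s; simp [Set.mem_Ioo, Set.mem_Iio, lt_min_iff, and_assoc]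
  rw [hset]
  set m : ℝ := min 1 u with hm
  have hm0 : 0 < m := lt_min one_pos hu
  rw [← MeasureTheory.integral_Ioc_eq_integral_Ioo,
    ← intervalIntegral.integral_of_le hm0.le]
  have h1 : ∫ s in (0:ℝ)..m, (n:ℝ) * (1-s)^(n-1)
      = ∫ s in (1-m)..(1:ℝ), (n:ℝ) * s^(n-1) := by
    have := intervalIntegral.integral_comp_sub_left (fun t => (n:ℝ) * t^(n-1)) 1
      (a := 0) (b := m)
    simpa using this
  rw [h1, intervalIntegral.integral_const_mul, integral_pow]
  have hnn : (n - 1) + 1 = n := Nat.succ_pred_eq_of_pos hn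
  rw [hnn, one_pow]
  have hcast : ((n - 1 : ℕ) : ℝ) + 1 = (n : ℝ) := by
    have : ((n-1:ℕ):ℝ) = (n:ℝ) - 1 := by
      push_cast [Nat.cast_sub hn]; ring
    rw [this]; ring
  rw [hcast, one_sub_min]
  have hne : (n:ℝ) ≠ 0 := Nat.cast_ne_zero.mpr (by omega)
  field_simp

lemma rep {Ω : Type*} [MeasureSpace Ω] [IsProbabilityMeasure (ℙ : Measure Ω)]
    (d : ℕ) (hd : 2 ≤ d)
    (R : Ω → ℝ) (hRm : Measurable R) (hR : ∀ᵐ ω ∂ℙ, 0 < R ω)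
    (x : ℝ) (hx : 0 < x) :
    1 - (∫ ω, (max (1 - (1/x) / R ω) 0) ^ (d - 1) ∂ℙ)
      = ((d-1:ℕ):ℝ) * ∫ s in Ioo (0:ℝ) 1,
          (1-s)^(d-2) * (ℙ {ω : Ω | x*s < 1 / R ω}).toReal := by
  set ν : Measure ℝ := volume.restrict (Ioo (0:ℝ) 1) with hν
  haveI : IsFiniteMeasure ν := by
    constructor
    rw [hν, Measure.restrict_apply_univ, Real.volume_Ioo]
    simp
  set F : Ω → ℝ → ℝ := fun ω s =>
    if x * s < 1 / R ω then ((d-1:ℕ):ℝ) * (1-s)^(d-2) else 0 with hF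
  -- measurability of uncurried F
  have hFm : Measurable (Function.uncurry F) := by
    apply Measurable.ite
    · exact measurableSet_lt (measurable_snd.const_mul x)
        (measurable_const.div (hRm.comp measurable_fst))
    · exact (measurable_const.mul ((measurable_const.sub measurable_snd).pow_const _))
    · exact measurable_const
  have hFint : Integrable (Function.uncurry F) ((volume : Measure Ω).prod ν) := by
    have hsnd : ∀ᵐ p : Ω × ℝ ∂((volume : Measure Ω).prod ν), p.2 ∈ Ioo (0:ℝ) 1 := by
      have hbad : ((volume : Measure Ω).prod ν) {p : Ω × ℝ | p.2 ∉ Ioo (0:ℝ) 1} = 0 := by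
        have hEq : {p : Ω × ℝ | p.2 ∉ Ioo (0:ℝ) 1}
            = (univ : Set Ω) ×ˢ {s : ℝ | s ∉ Ioo (0:ℝ) 1} := by
          ext p; simp
        rw [hEq, Measure.prod_prod]
        have : ν {s : ℝ | s ∉ Ioo (0:ℝ) 1} = 0 := by
          rw [hν]
          have hc : {s : ℝ | s ∉ Ioo (0:ℝ) 1} = (Ioo (0:ℝ) 1)ᶜ := rfl
          rw [hc, Measure.restrict_apply measurableSet_Ioo.compl]
          simp
        rw [this, mul_zero]
      exact hbad
    apply Integrable.mono' (integrable_const ((d-1:ℕ):ℝ))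
      hFm.aestronglyMeasurable
    filter_upwards [hsnd] with p hp
    rw [hF]
    simp only [Function.uncurry]
    split_ifs with h
    · rw [Real.norm_eq_abs, abs_mul, abs_of_nonneg (by positivity : (0:ℝ) ≤ ((d-1:ℕ):ℝ))]
      have h1 : |(1 - p.2)^(d-2)| ≤ 1 := by
        rw [abs_pow]
        apply pow_le_one₀ (abs_nonneg _)
        rw [abs_le]; constructor <;> [linarith [hp.2]; linarith [hp.1]]
      nlinarith [Nat.cast_nonneg (α := ℝ) (d-1), abs_nonneg ((1-p.2)^(d-2))]
    · simp
  -- step 1: 1 - ψ as integral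
  have hψint : Integrable (fun ω => (max (1 - (1/x) / R ω) 0) ^ (d - 1)) ℙ := by
    apply Integrable.mono' (integrable_const (1:ℝ))
    · exact ((((measurable_const.sub (measurable_const.div hRm)).max measurable_const).pow_const _)).aestronglyMeasurable
    · filter_upwards [hR] with ω hω
      rw [Real.norm_eq_abs, abs_pow]
      apply pow_le_one₀ (abs_nonneg _)
      rw [abs_le]
      constructor
      · have := le_max_right (1 - (1/x) / R ω) 0; linarith
      · apply max_le _ zero_le_one
        have : 0 ≤ (1/x) / R ω := by positivity
        linarith
  have step1 : 1 - (∫ ω, (max (1 - (1/x) / R ω) 0) ^ (d - 1) ∂ℙ)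
      = ∫ ω, (1 - (max (1 - (1/x) / R ω) 0) ^ (d - 1)) ∂ℙ := by
    rw [integral_sub (integrable_const 1) hψint, integral_const]
    simp
  -- step 2: inner identity
  have step2 : ∀ᵐ ω ∂ℙ, (1 - (max (1 - (1/x) / R ω) 0) ^ (d - 1))
      = ∫ s, F ω s ∂ν := by
    filter_upwards [hR] with ω hω
    have hu : 0 < 1/(x * R ω) := by positivity
    have hiff : ∀ s : ℝ, (x * s < 1 / R ω) ↔ s < 1/(x * R ω) := by
      intro s
      rw [lt_div_iff₀ hω, lt_div_iff₀ (by positivity : 0 < x * R ω)]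
      constructor <;> intro h <;> nlinarith
    have : ∀ s : ℝ, F ω s = if s < 1/(x * R ω) then ((d-1:ℕ):ℝ) * (1-s)^(d-2) else 0 := by
      intro s; rw [hF]; simp only [hiff]
    rw [hν, MeasureTheory.integral_congr_ae (Filter.Eventually.of_forall this)]
    have hd2 : (d-1) - 1 = d - 2 := by omega
    have := calc0 (d-1) (by omega) (1/(x * R ω)) hu
    rw [hd2] at this
    rw [this]
    congr 2
    rw [div_div]
  rw [step1, MeasureTheory.integral_congr_ae step2]
  -- step 3: swap
  rw [MeasureTheory.integral_integral_swap hFint]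
  -- step 4: inner Ω integral
  have step4 : ∀ s : ℝ, ∫ ω, F ω s ∂ℙ
      = ((d-1:ℕ):ℝ) * ((1-s)^(d-2) * (ℙ {ω : Ω | x*s < 1 / R ω}).toReal) := by
    intro s
    have hA : MeasurableSet {ω : Ω | x*s < 1 / R ω} :=
      measurableSet_lt measurable_const (measurable_const.div hRm)
    have : ∀ ω, F ω s = ({ω : Ω | x*s < 1 / R ω}).indicator
        (fun _ => ((d-1:ℕ):ℝ) * (1-s)^(d-2)) ω := by
      intro ω; rw [hF]; simp [Set.indicator_apply]
    rw [MeasureTheory.integral_congr_ae (Filter.Eventually.of_forall this),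
      MeasureTheory.integral_indicator_const _ hA]
    rw [smul_eq_mul, measureReal_def]; ring
  rw [MeasureTheory.integral_congr_ae (Filter.Eventually.of_forall step4), hν,
    MeasureTheory.integral_const_mul]


lemma telescope (g : ℝ → ℝ) (β M : ℝ) (hM : 0 < M)
    (hK : ∀ y, M ≤ y → g y ≤ 2^β * g (2*y)) :
    ∀ n : ℕ, ∀ y, M ≤ y → g y ≤ ((2:ℝ)^β)^n * g (2^n * y) := by
  intro n
  induction n with
  | zero => intro y hy; simp
  | succ n ih =>
    intro y hy
    have h1 : g y ≤ 2^β * g (2*y) := hK y hy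
    have h2 : g (2*y) ≤ ((2:ℝ)^β)^n * g (2^n * (2*y)) := by
      apply ih
      nlinarith
    have hb : (0:ℝ) < 2^β := Real.rpow_pos_of_pos (by norm_num) β
    calc g y ≤ 2^β * g (2*y) := h1
      _ ≤ 2^β * (((2:ℝ)^β)^n * g (2^n * (2*y))) := by
          apply mul_le_mul_of_nonneg_left h2 hb.le
      _ = ((2:ℝ)^β)^(n+1) * g (2^(n+1) * y) := by
          rw [pow_succ, pow_succ]; ring_nf
  
lemma rpow_pow (β : ℝ) (n : ℕ) : ((2:ℝ)^β)^n = ((2:ℝ)^n)^β := by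
  rw [← Real.rpow_natCast ((2:ℝ)^β) n, ← Real.rpow_mul (by norm_num), mul_comm,
    Real.rpow_mul (by norm_num), Real.rpow_natCast]

lemma potter_bound (g : ℝ → ℝ) (hganti : Antitone g) (hgpos : ∀ x, 0 < g x)
    (hg1 : ∀ x, g x ≤ 1) (β M : ℝ) (hβ : 0 < β) (hM : 1 ≤ M)
    (hK : ∀ y, M ≤ y → g y ≤ 2^β * g (2*y)) :
    ∀ x, M ≤ x → ∀ s, 0 < s → s < 1 →
      g (x*s) ≤ (2^β / g M) * s^(-β) * g x := by
  intro x hx s hs hs1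
  have hM0 : (0:ℝ) < M := lt_of_lt_of_le one_pos hM
  have hx0 : (0:ℝ) < x := lt_of_lt_of_le hM0 hx
  have hb : (0:ℝ) < 2^β := Real.rpow_pos_of_pos (by norm_num) β
  have hsβ : (0:ℝ) < s^(-β) := Real.rpow_pos_of_pos hs _
  have hsβ1 : (1:ℝ) ≤ s^(-β) :=
    Real.one_le_rpow_of_pos_of_le_one_of_nonpos hs hs1.le (by linarith)
  -- lower bound for g x : g M ≤ 2^β * (x/M)^β * g x
  have hlow : g M ≤ 2^β * (x/M)^β * g x := by
    obtain ⟨n, hn, hmin⟩ : ∃ n : ℕ, x ≤ 2^n * M ∧ ∀ m : ℕ, m < n → ¬ (x ≤ 2^m * M) := by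
      have hex : ∃ n : ℕ, x ≤ 2^n * M := by
        obtain ⟨n, hn⟩ := pow_unbounded_of_one_lt (x/M) (one_lt_two (α := ℝ))
        exact ⟨n, by rw [← div_le_iff₀ hM0] at *; exact hn.le⟩
      exact ⟨Nat.find hex, Nat.find_spec hex, fun m hm => Nat.find_min hex hm⟩
    have h1 : g M ≤ ((2:ℝ)^β)^n * g (2^n * M) := telescope g β M hM0 hK n M le_rfl
    have h2 : g (2^n * M) ≤ g x := hganti hn
    have h3 : ((2:ℝ)^β)^n ≤ 2^β * (x/M)^β := by
      rw [rpow_pow]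
      have h2n : ((2:ℝ)^n) ≤ 2 * (x/M) := by
        cases n with
        | zero =>
          simp only [pow_zero]
          have : (1:ℝ) ≤ x/M := (one_le_div hM0).mpr hx
          linarith
        | succ m =>
          have := hmin m (Nat.lt_succ_self m)
          push_neg at this
          rw [pow_succ]
          have : (2:ℝ)^m < x/M := by rw [lt_div_iff₀ hM0]; linarith
          linarith
      calc ((2:ℝ)^n)^β ≤ (2 * (x/M))^β := by
            apply Real.rpow_le_rpow (by positivity) h2n hβ.le
        _ = 2^β * (x/M)^β := Real.mul_rpow (by norm_num) (by positivity)
    calc g M ≤ ((2:ℝ)^β)^n * g (2^n * M) := h1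
      _ ≤ ((2:ℝ)^β)^n * g x := mul_le_mul_of_nonneg_left h2 (by positivity)
      _ ≤ 2^β * (x/M)^β * g x := mul_le_mul_of_nonneg_right h3 (hgpos x).le
  rcases le_or_gt M (x*s) with hcase | hcase
  · -- telescoping case
    obtain ⟨n, hn, hmin⟩ : ∃ n : ℕ, x ≤ 2^n * (x*s) ∧ ∀ m : ℕ, m < n → ¬ (x ≤ 2^m * (x*s)) := by
      have hex : ∃ n : ℕ, x ≤ 2^n * (x*s) := by
        obtain ⟨n, hn⟩ := pow_unbounded_of_one_lt (x/(x*s)) (one_lt_two (α := ℝ))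
        exact ⟨n, by rw [← div_le_iff₀ (by positivity : (0:ℝ) < x*s)]; exact hn.le⟩
      exact ⟨Nat.find hex, Nat.find_spec hex, fun m hm => Nat.find_min hex hm⟩
    have h1 : g (x*s) ≤ ((2:ℝ)^β)^n * g (2^n * (x*s)) :=
      telescope g β M hM0 hK n (x*s) hcase
    have h2 : g (2^n * (x*s)) ≤ g x := hganti hn
    have h3 : ((2:ℝ)^β)^n ≤ 2^β * s^(-β) := by
      rw [rpow_pow]
      have h2n : ((2:ℝ)^n) ≤ 2 / s := by
        cases n with
        | zero =>
          simp only [pow_zero]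
          rw [le_div_iff₀ hs]; linarith
        | succ m =>
          have hh := hmin m (Nat.lt_succ_self m)
          push_neg at hh
          rw [pow_succ]
          have : (2:ℝ)^m < 1/s := by
            rw [lt_div_iff₀ hs]
            have := hh
            nlinarith
          rw [div_eq_mul_one_div]
          linarith
      calc ((2:ℝ)^n)^β ≤ (2/s)^β := Real.rpow_le_rpow (by positivity) h2n hβ.le
        _ = 2^β / s^β := Real.div_rpow (by norm_num) hs.le β
        _ = 2^β * s^(-β) := by rw [Real.rpow_neg hs.le, div_eq_mul_inv]
    have hgM1 : 2^β ≤ 2^β / g M := by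
      rw [le_div_iff₀ (hgpos M)]
      nlinarith [hg1 M, hgpos M]
    calc g (x*s) ≤ ((2:ℝ)^β)^n * g x :=
          le_trans h1 (mul_le_mul_of_nonneg_left h2 (by positivity))
      _ ≤ (2^β * s^(-β)) * g x := mul_le_mul_of_nonneg_right h3 (hgpos x).le
      _ ≤ (2^β / g M * s^(-β)) * g x := by
          apply mul_le_mul_of_nonneg_right _ (hgpos x).le
          exact mul_le_mul_of_nonneg_right hgM1 hsβ.le
  · -- small case: x*s < M
    have hsM : s < M / x := by rwa [lt_div_iff₀ hx0, mul_comm]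
    have key : (1:ℝ) ≤ s^(-β) * (M/x)^β := by
      have h1 : s^β ≤ (M/x)^β := Real.rpow_le_rpow hs.le hsM.le hβ.le
      have h2 : s^(-β) * s^β = 1 := by
        rw [← Real.rpow_add hs]; simp
      calc (1:ℝ) = s^(-β) * s^β := h2.symm
        _ ≤ s^(-β) * (M/x)^β := mul_le_mul_of_nonneg_left h1 hsβ.le
    have key2 : (M/x)^β ≤ (2^β / g M) * g x := by
      rw [div_mul_eq_mul_div, le_div_iff₀ (hgpos M)]
      have hmul : (M/x)^β * (x/M)^β = 1 := by
        rw [← Real.mul_rpow (by positivity) (by positivity)]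
        field_simp; simp
      calc (M/x)^β * g M ≤ (M/x)^β * (2^β * (x/M)^β * g x) :=
            mul_le_mul_of_nonneg_left hlow (by positivity)
        _ = ((M/x)^β * (x/M)^β) * (2^β * g x) := by ring
        _ = 2^β * g x := by rw [hmul, one_mul]
    calc g (x*s) ≤ 1 := hg1 _
      _ ≤ s^(-β) * (M/x)^β := key
      _ ≤ s^(-β) * ((2^β / g M) * g x) := mul_le_mul_of_nonneg_left key2 hsβ.le
      _ = (2^β / g M) * s^(-β) * g x := by ring


theorem williamson_transform_regvar_at_origin
    {Ω : Type*} [MeasureSpace Ω] [IsProbabilityMeasure (ℙ : Measure Ω)]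
    (d : ℕ) (hd : 2 ≤ d)
    (R : Ω → ℝ) (hRm : Measurable R) (hR : ∀ᵐ ω ∂ℙ, 0 < R ω)
    (α : ℝ) (hα : α ∈ Set.Ioo (0:ℝ) 1)
    -- the survival function of 1/R is regularly varying with index -α
    (hRV : ∀ c > (0:ℝ), Tendsto
      (fun x => (ℙ {ω | c * x < 1 / R ω}).toReal / (ℙ {ω | x < 1 / R ω}).toReal)
      atTop (nhds (c ^ (-α))))
    (ψ : ℝ → ℝ)
    (hψ : ∀ x : ℝ, ψ x = ∫ ω, (max (1 - x / R ω) 0) ^ (d - 1) ∂ℙ) :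
    ∀ c > (0:ℝ), Tendsto
      (fun x => (1 - ψ (1 / (c * x))) / (1 - ψ (1 / x)))
      atTop (nhds (c ^ (-α))) := by
  obtain ⟨hα0, hα1⟩ := hα
  set g : ℝ → ℝ := fun y => (ℙ {ω | y < 1 / R ω}).toReal with hgdef
  have hRVg : ∀ c, 0 < c →
      Tendsto (fun x => g (c*x) / g x) atTop (nhds (c^(-α))) := fun c hc => hRV c hc
  have hganti : Antitone g := by
    intro a b hab
    exact ENNReal.toReal_mono (measure_ne_top _ _)
      (measure_mono (fun ω h => lt_of_le_of_lt hab h))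
  have hg0 : ∀ y, 0 ≤ g y := fun y => ENNReal.toReal_nonneg
  have hg1 : ∀ y, g y ≤ 1 := by
    intro y
    have h : (ℙ {ω | y < 1/R ω}) ≤ 1 := prob_le_one
    have h2 := ENNReal.toReal_mono ENNReal.one_ne_top h
    rwa [ENNReal.toReal_one] at h2
  have hgm : Measurable g := hganti.measurable
  -- positivity of g
  have hgpos : ∀ y, 0 < g y := by
    have h1 : Tendsto (fun x => g x / g x) atTop (nhds 1) := by
      have := hRV 1 one_pos
      simp only [one_mul, Real.one_rpow] at this
      exact this
    have h2 : ∀ᶠ x in atTop, g x ≠ 0 := by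
      filter_upwards [h1.eventually (eventually_gt_nhds (by norm_num : (0:ℝ) < 1))] with x hx
      intro h0; rw [h0, div_zero] at hx; exact lt_irrefl 0 hx
    obtain ⟨M₁, hM₁⟩ := eventually_atTop.mp h2
    intro y
    have hy1 : 0 < g (max y M₁) :=
      lt_of_le_of_ne (hg0 _) (Ne.symm (hM₁ _ (le_max_right _ _)))
    exact lt_of_lt_of_le hy1 (hganti (le_max_left y M₁))
  -- Potter-type bound setup
  set β : ℝ := (1+α)/2 with hβdef
  have hβα : α < β := by rw [hβdef]; linarith
  have hβ1 : β < 1 := by rw [hβdef]; linarith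
  have hβ0 : 0 < β := by rw [hβdef]; linarith
  have hhalf : Tendsto (fun x => g ((1/2)*x) / g x) atTop (nhds ((2:ℝ)^α)) := by
    have h := hRVg (1/2) (by norm_num)
    have heq : ((1:ℝ)/2)^(-α) = (2:ℝ)^α := by
      rw [one_div, Real.inv_rpow (by norm_num : (0:ℝ) ≤ 2),
        Real.rpow_neg (by norm_num : (0:ℝ) ≤ 2), inv_inv]
    rwa [heq] at h
  have h2αβ : (2:ℝ)^α < 2^β :=
    (Real.rpow_lt_rpow_left_iff one_lt_two).mpr hβα
  obtain ⟨M₂, hM₂⟩ := eventually_atTop.mp (hhalf.eventually (eventually_lt_nhds h2αβ))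
  set M : ℝ := max 1 (M₂/2) with hMdef
  have hK : ∀ y, M ≤ y → g y ≤ 2^β * g (2*y) := by
    intro y hy
    have h2y : M₂ ≤ 2*y := by
      have : M₂/2 ≤ y := le_trans (le_max_right _ _) hy
      linarith
    have h := hM₂ (2*y) h2y
    rw [show (1:ℝ)/2 * (2*y) = y by ring] at h
    rw [div_lt_iff₀ (hgpos (2*y))] at h
    linarith
  have hPot := potter_bound g hganti hgpos hg1 β M hβ0 (le_max_left _ _) hK
  have hMpos : (0:ℝ) < M := lt_of_lt_of_le one_pos (le_max_left _ _)
  -- the limit integral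
  set φ : ℝ → ℝ := fun s => (1-s)^(d-2) * s^(-α) with hφdef
  have hφm : Measurable φ :=
    ((measurable_const.sub measurable_id).pow_const _).mul
      (by measurability : Measurable (fun s : ℝ => s ^ (-α)))
  have hrintβ : IntegrableOn (fun s : ℝ => s^(-β)) (Ioo (0:ℝ) 1) := by
    have h := intervalIntegral.intervalIntegrable_rpow' (a:=0) (b:=1) (r:=-β) (by linarith)
    exact h.1.mono_set Ioo_subset_Ioc_self
  have hrintα : IntegrableOn (fun s : ℝ => s^(-α)) (Ioo (0:ℝ) 1) := by
    have h := intervalIntegral.intervalIntegrable_rpow' (a:=0) (b:=1) (r:=-α) (by linarith)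
    exact h.1.mono_set Ioo_subset_Ioc_self
  have habs1 : ∀ s : ℝ, s ∈ Ioo (0:ℝ) 1 → |(1-s)^(d-2)| ≤ 1 := by
    intro s hs
    rw [abs_pow]
    apply pow_le_one₀ (abs_nonneg _)
    rw [abs_le]; constructor
    · linarith [hs.2]
    · linarith [hs.1]
  have hφint : IntegrableOn φ (Ioo (0:ℝ) 1) := by
    apply Integrable.mono' hrintα hφm.aestronglyMeasurable
    rw [ae_restrict_iff' measurableSet_Ioo]
    apply Eventually.of_forall
    intro s hs
    have hsα : (0:ℝ) < s^(-α) := Real.rpow_pos_of_pos hs.1 _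
    rw [hφdef, Real.norm_eq_abs, abs_mul, abs_of_pos hsα]
    calc |(1-s)^(d-2)| * s^(-α) ≤ 1 * s^(-α) :=
          mul_le_mul_of_nonneg_right (habs1 s hs) hsα.le
      _ = s^(-α) := one_mul _
  set I : ℝ := ∫ s in Ioo (0:ℝ) 1, φ s with hIdef
  have hφnn : ∀ s ∈ Ioo (0:ℝ) 1, 0 < φ s := by
    intro s hs
    rw [hφdef]
    have h1 : (0:ℝ) < 1 - s := by linarith [hs.2]
    exact mul_pos (pow_pos h1 _) (Real.rpow_pos_of_pos hs.1 _)
  have hIpos : 0 < I := by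
    rw [hIdef, setIntegral_pos_iff_support_of_nonneg_ae _ hφint]
    · have hsub : Ioo (0:ℝ) 1 ⊆ Function.support φ := fun s hs => (hφnn s hs).ne'
      rw [Set.inter_eq_self_of_subset_right hsub, Real.volume_Ioo]
      norm_num
    · rw [EventuallyLE, ae_restrict_iff' measurableSet_Ioo]
      exact Eventually.of_forall (fun s hs => (hφnn s hs).le)
  -- W and the DCT
  set W : ℝ → ℝ := fun x => ∫ s in Ioo (0:ℝ) 1, (1-s)^(d-2) * g (x*s) with hWdef
  have hA : Tendsto (fun x => W x / g x) atTop (nhds I) := by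
    have key : Tendsto (fun x => ∫ s in Ioo (0:ℝ) 1, (1-s)^(d-2) * (g (x*s) / g x))
        atTop (nhds I) := by
      rw [hIdef]
      apply MeasureTheory.tendsto_integral_filter_of_dominated_convergence
        (bound := fun s => (2^β / g M) * s^(-β))
      · apply Eventually.of_forall; intro x
        exact (((measurable_const.sub measurable_id).pow_const _).mul
          ((hgm.comp (measurable_id.const_mul x)).div_const _)).aestronglyMeasurable
      · filter_upwards [eventually_ge_atTop M] with x hx
        rw [ae_restrict_iff' measurableSet_Ioo]
        apply Eventually.of_forall
        intro s hs
        have h2 : g (x*s)/g x ≤ (2^β / g M) * s^(-β) := by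
          rw [div_le_iff₀ (hgpos x)]
          exact hPot x hx s hs.1 hs.2
        have h2' : 0 ≤ g (x*s)/g x := div_nonneg (hg0 _) (hg0 _)
        rw [Real.norm_eq_abs, abs_mul, abs_of_nonneg h2']
        calc |(1-s)^(d-2)| * (g (x*s)/g x) ≤ 1 * ((2^β / g M) * s^(-β)) :=
              mul_le_mul (habs1 s hs) h2 h2' zero_le_one
          _ = (2^β / g M) * s^(-β) := one_mul _
      · exact hrintβ.const_mul _
      · rw [ae_restrict_iff' measurableSet_Ioo]
        apply Eventually.of_forall
        intro s hs
        have h := hRVg s hs.1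
        have := h.const_mul ((1-s)^(d-2))
        exact Tendsto.congr (fun x => by rw [mul_comm s x]) this
    have heq : ∀ x, ∫ s in Ioo (0:ℝ) 1, (1-s)^(d-2) * (g (x*s) / g x) = W x / g x := by
      intro x
      rw [hWdef]
      rw [← MeasureTheory.integral_div]
      apply integral_congr_ae
      exact Eventually.of_forall (fun s => (mul_div_assoc _ _ _).symm)
    exact Tendsto.congr heq key
  -- final assembly
  intro c hc
  have hcx : Tendsto (fun x : ℝ => c*x) atTop atTop :=
    Tendsto.const_mul_atTop hc tendsto_id
  have hAc : Tendsto (fun x => W (c*x) / g (c*x)) atTop (nhds I) := hA.comp hcx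
  have hGc := hRVg c hc
  have hlim : Tendsto (fun x => (W (c*x)/g (c*x)) * (g (c*x)/g x) / (W x/g x))
      atTop (nhds (c^(-α))) := by
    have h := (hAc.mul hGc).div hA hIpos.ne'
    have heq : I * c^(-α) / I = c^(-α) := by
      rw [mul_comm, mul_div_assoc, div_self hIpos.ne', mul_one]
    rwa [heq] at h
  have hWev : ∀ᶠ x in atTop, W x ≠ 0 := by
    filter_upwards [hA.eventually (eventually_gt_nhds hIpos)] with x hx
    intro h0; rw [h0, zero_div] at hx; exact lt_irrefl 0 hx
  apply hlim.congr'
  filter_upwards [hWev, eventually_gt_atTop 0] with x hW hx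
  have hdne : ((d-1:ℕ):ℝ) ≠ 0 := Nat.cast_ne_zero.mpr (by omega)
  have hrep1 : 1 - ψ (1 / (c*x)) = ((d-1:ℕ):ℝ) * W (c*x) := by
    rw [hψ (1/(c*x))]
    exact rep d hd R hRm hR (c*x) (by positivity)
  have hrep2 : 1 - ψ (1 / x) = ((d-1:ℕ):ℝ) * W x := by
    rw [hψ (1/x)]
    exact rep d hd R hRm hR x hx
  rw [hrep1, hrep2, mul_div_mul_left _ _ hdne]
  field_simp [(hgpos x).ne', (hgpos (c*x)).ne', hW]
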